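/- Let X, Y be finite sets, Θ compact, p(x,y|θ) continuous in θ. If π̂ ∈ P maximizes the conditional mutual information I_{θ,y|x}(π) over P and p_{π̂}(x) > 0 for every x ∈ X, then the Bayesian predictive density p_{π̂}(y|x) is minimax: sup_{θ∈Θ} R(θ, p_{π̂}(·|·)) = inf_q sup_{θ∈Θ} R(θ, q), where the infimum is over all predictive densities q. -/

import Mathlib

open MeasureTheory

noncomputable def negEnt (u : ℝ) : ℝ := u * Real.log u

noncomputable def pMix {Θ X Y : Type*} [MeasurableSpace Θ]
    (p : X → Y → Θ → ℝ) (π : ProbabilityMeasure Θ) (x : X) (y : Y) : ℝ :=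
  ∫ θ, p x y θ ∂(π : Measure Θ)

noncomputable def condMutualInfo {Θ X Y : Type*} [MeasurableSpace Θ] [Fintype X] [Fintype Y]
    (p : X → Y → Θ → ℝ) (π : ProbabilityMeasure Θ) : ℝ :=
  (∫ θ, ∑ x : X, ∑ y : Y, negEnt (p x y θ) ∂(π : Measure Θ))
    - ∑ x : X, ∑ y : Y, negEnt (pMix p π x y)
    - (∫ θ, ∑ x : X, negEnt (∑ y : Y, p x y θ) ∂(π : Measure Θ))
    + ∑ x : X, negEnt (∑ y : Y, pMix p π x y)

def IsPredDensity {X Y : Type*} [Fintype Y] (q : X → Y → ℝ) : Prop :=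
  (∀ x y, 0 ≤ q x y ∧ q x y ≤ 1) ∧ ∀ x, ∑ y : Y, q x y = 1

/-- `a log(b/c)` with the conventions `0 log 0 = 0`, `0 log(c/0) = 0`, `a log(b/0) = +∞`
for `a > 0`. -/
noncomputable def klTerm (a b c : ℝ) : EReal :=
  if a = 0 then 0 else if c = 0 then ⊤ else ((a * Real.log (b / c) : ℝ) : EReal)

/-- KL risk `R(θ,q) = Σ_{x,y} p(x,y|θ) log( p(y|x,θ)/q(y;x) )`. -/
noncomputable def risk {Θ X Y : Type*} [Fintype X] [Fintype Y]
    (p : X → Y → Θ → ℝ) (q : X → Y → ℝ) (θ : Θ) : EReal :=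
  ∑ x : X, ∑ y : Y, klTerm (p x y θ) (p x y θ / ∑ y' : Y, p x y' θ) (q x y)


open Filter Topology

section Helpers

lemma contIntegrable {Θ : Type*} [MetricSpace Θ] [CompactSpace Θ] [MeasurableSpace Θ]
    [BorelSpace Θ] {f : Θ → ℝ} (hf : Continuous f) (μ : Measure Θ) [IsFiniteMeasure μ] :
    Integrable f μ :=
  hf.integrable_of_hasCompactSupport (HasCompactSupport.of_compactSpace f)

lemma erealCoeSum {ι : Type*} (s : Finset ι) (f : ι → ℝ) :
    ((∑ i ∈ s, f i : ℝ) : EReal) = ∑ i ∈ s, ((f i : ℝ) : EReal) :=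
  map_sum (⟨⟨(fun r : ℝ => (r : EReal)), EReal.coe_zero⟩, fun a b => EReal.coe_add a b⟩ : ℝ →+ EReal) f s

lemma erealSumNeBot {ι : Type*} (s : Finset ι) (f : ι → EReal) (hb : ∀ i ∈ s, f i ≠ ⊥) :
    ∑ i ∈ s, f i ≠ ⊥ := by
  classical
  induction s using Finset.induction with
  | empty => simp
  | @insert a s' hn ih =>
    rw [Finset.sum_insert hn]
    exact WithBot.add_ne_bot.2 ⟨hb a (Finset.mem_insert_self a s'),
      ih fun i hi => hb i (Finset.mem_insert_of_mem hi)⟩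

lemma erealSumEqTop {ι : Type*} (s : Finset ι) (f : ι → EReal) (hb : ∀ i ∈ s, f i ≠ ⊥)
    (i0 : ι) (hi0 : i0 ∈ s) (ht : f i0 = ⊤) : ∑ i ∈ s, f i = ⊤ := by
  classical
  rw [← Finset.add_sum_erase s f hi0, ht]
  exact EReal.top_add_of_ne_bot (erealSumNeBot _ _ fun i hi => hb i (Finset.mem_of_mem_erase hi))

lemma klTermNeBot (a b c : ℝ) : klTerm a b c ≠ ⊥ := by
  unfold klTerm
  split_ifs <;> simp [← EReal.coe_mul]

lemma klTermTop {a b c : ℝ} (ha : a ≠ 0) (hc : c = 0) : klTerm a b c = ⊤ := by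
  unfold klTerm; rw [if_neg ha, if_pos hc]

noncomputable def mixP {Θ : Type*} [MeasurableSpace Θ] (pri : ProbabilityMeasure Θ) (θ0 : Θ)
    (t : ℝ) (ht0 : 0 ≤ t) (ht1 : t ≤ 1) : ProbabilityMeasure Θ :=
  ⟨ENNReal.ofReal (1 - t) • (pri : Measure Θ) + ENNReal.ofReal t • Measure.dirac θ0, by
    constructor
    simp only [Measure.add_apply, Measure.smul_apply, smul_eq_mul, measure_univ, mul_one]
    rw [← ENNReal.ofReal_add (by linarith) ht0]
    norm_num⟩

lemma integral_mixP {Θ : Type*} [MetricSpace Θ] [CompactSpace Θ] [MeasurableSpace Θ]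
    [BorelSpace Θ] (pri : ProbabilityMeasure Θ) (θ0 : Θ) (t : ℝ) (ht0 : 0 ≤ t) (ht1 : t ≤ 1)
    {f : Θ → ℝ} (hf : Continuous f) :
    ∫ θ, f θ ∂(mixP pri θ0 t ht0 ht1 : Measure Θ)
      = (1 - t) * ∫ θ, f θ ∂(pri : Measure Θ) + t * f θ0 := by
  have h1 : Integrable f ((pri : Measure Θ)) :=
    hf.integrable_of_hasCompactSupport (HasCompactSupport.of_compactSpace f)
  have h2 : Integrable f (Measure.dirac θ0) :=
    hf.integrable_of_hasCompactSupport (HasCompactSupport.of_compactSpace f)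
  show ∫ θ, f θ ∂(ENNReal.ofReal (1 - t) • (pri : Measure Θ) + ENNReal.ofReal t • Measure.dirac θ0) = _
  rw [integral_add_measure (h1.smul_measure ENNReal.ofReal_ne_top)
      (h2.smul_measure ENNReal.ofReal_ne_top),
    integral_smul_measure, integral_smul_measure,
    integral_dirac' f θ0 hf.stronglyMeasurable,
    ENNReal.toReal_ofReal (by linarith), ENNReal.toReal_ofReal ht0, smul_eq_mul, smul_eq_mul]

lemma slope_negEnt_tendsto {m d : ℝ} (hm : 0 < m) :
    Tendsto (fun t => (negEnt (m + t * d) - negEnt m) / t) (𝓝[>] (0:ℝ))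
      (𝓝 (d * (Real.log m + 1))) := by
  have haff : HasDerivAt (fun t : ℝ => m + t * d) d 0 := by
    simpa using ((hasDerivAt_id (0:ℝ)).mul_const d).const_add m
  have hcomp : HasDerivAt (fun t : ℝ => negEnt (m + t * d)) (d * (Real.log m + 1)) 0 := by
    have := (Real.hasDerivAt_mul_log (x := m + 0 * d) (by simpa using hm.ne')).comp 0 haff
    simpa [negEnt, mul_comm, Function.comp_def] using this
  have h2 : Tendsto (slope (fun t : ℝ => negEnt (m + t * d)) 0) (𝓝[>] (0:ℝ))
      (𝓝 (d * (Real.log m + 1))) :=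
    (hasDerivAt_iff_tendsto_slope.1 hcomp).mono_left
      (nhdsWithin_mono 0 (fun x hx => ne_of_gt hx))
  refine h2.congr fun t => ?_
  rw [slope_def_field]
  simp [negEnt]

lemma negEnt_zero : negEnt 0 = 0 := by simp [negEnt]

lemma slope_negEnt_zero (c t : ℝ) (ht : t ≠ 0) :
    (negEnt (0 + t * c) - negEnt 0) / t = c * Real.log (t * c) := by
  rw [negEnt_zero, zero_add, sub_zero, negEnt]
  field_simp

lemma slope_negEnt_zero_atTop {c : ℝ} (hc : 0 < c) :
    Tendsto (fun t => -((negEnt (0 + t * c) - negEnt 0) / t)) (𝓝[>] (0:ℝ)) atTop := by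
  have h1 : Tendsto (fun t : ℝ => t * c) (𝓝[>] (0:ℝ)) (𝓝[≠] (0:ℝ)) := by
    rw [tendsto_nhdsWithin_iff]
    constructor
    · have : Tendsto (fun t : ℝ => t * c) (𝓝 (0:ℝ)) (𝓝 (0 * c)) :=
        (continuous_id.mul continuous_const).tendsto 0
      simpa using this.mono_left nhdsWithin_le_nhds
    · filter_upwards [self_mem_nhdsWithin] with t ht
      exact ne_of_gt (mul_pos ht hc)
  have h2 : Tendsto (fun t : ℝ => Real.log (t * c)) (𝓝[>] (0:ℝ)) atBot :=
    Real.tendsto_log_nhdsNE_zero.comp h1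
  have h3 : Tendsto (fun t : ℝ => -(c * Real.log (t * c))) (𝓝[>] (0:ℝ)) atTop := by
    have := (h2.const_mul_atBot hc)
    exact tendsto_neg_atBot_atTop.comp this
  refine h3.congr' ?_
  filter_upwards [self_mem_nhdsWithin] with t ht
  rw [slope_negEnt_zero c t (ne_of_gt ht)]

/-- If `q x y = 0` implies `p x y θ = 0`, the risk is real-valued with an explicit formula. -/
lemma risk_eq_real {Θ X Y : Type*} [Fintype X] [Fintype Y]
    (p : X → Y → Θ → ℝ) (q : X → Y → ℝ) (θ : Θ)
    (hnn : ∀ x y, 0 ≤ p x y θ)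
    (hz : ∀ x y, q x y = 0 → p x y θ = 0) :
    risk p q θ =
      (((∑ x : X, ∑ y : Y, negEnt (p x y θ)) - (∑ x : X, negEnt (∑ y : Y, p x y θ))
        - ∑ x : X, ∑ y : Y, p x y θ * Real.log (q x y) : ℝ) : EReal) := by
  classical
  have key : ∀ x : X, (∑ y : Y, klTerm (p x y θ) (p x y θ / ∑ y' : Y, p x y' θ) (q x y))
      = (((∑ y : Y, negEnt (p x y θ)) - negEnt (∑ y : Y, p x y θ)
          - ∑ y : Y, p x y θ * Real.log (q x y) : ℝ) : EReal) := by
    intro x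
    have hxnn : ∀ y, 0 ≤ p x y θ := fun y => hnn x y
    have hrw : ((∑ y : Y, negEnt (p x y θ)) - negEnt (∑ y : Y, p x y θ)
          - ∑ y : Y, p x y θ * Real.log (q x y) : ℝ)
        = ∑ y : Y, (negEnt (p x y θ) - p x y θ * Real.log (∑ y' : Y, p x y' θ)
            - p x y θ * Real.log (q x y)) := by
      rw [Finset.sum_sub_distrib, Finset.sum_sub_distrib, ← Finset.sum_mul]
      unfold negEnt; ring
    rw [hrw, erealCoeSum]
    refine Finset.sum_congr rfl fun y _ => ?_
    rcases eq_or_lt_of_le (hxnn y) with hp0 | hpp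
    · rw [klTerm, if_pos hp0.symm, ← hp0]
      norm_num [negEnt]
    · have hq : q x y ≠ 0 := fun h => absurd (hz x y h) (ne_of_gt hpp)
      have hpx : 0 < ∑ y' : Y, p x y' θ :=
        lt_of_lt_of_le hpp (Finset.single_le_sum (fun y' _ => hxnn y') (Finset.mem_univ y))
      rw [klTerm, if_neg (ne_of_gt hpp), if_neg hq]
      congr 1
      rw [Real.log_div (div_ne_zero (ne_of_gt hpp) (ne_of_gt hpx)) hq,
        Real.log_div (ne_of_gt hpp) (ne_of_gt hpx)]
      unfold negEnt; ring
  unfold risk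
  rw [show ((∑ x : X, ∑ y : Y, negEnt (p x y θ)) - (∑ x : X, negEnt (∑ y : Y, p x y θ))
        - ∑ x : X, ∑ y : Y, p x y θ * Real.log (q x y) : ℝ)
      = ∑ x : X, ((∑ y : Y, negEnt (p x y θ)) - negEnt (∑ y : Y, p x y θ)
          - ∑ y : Y, p x y θ * Real.log (q x y)) by
    rw [Finset.sum_sub_distrib, Finset.sum_sub_distrib]]
  rw [erealCoeSum]
  exact Finset.sum_congr rfl fun x _ => key x

lemma key_upper {Θ X Y : Type*} [MetricSpace Θ] [CompactSpace Θ] [Nonempty Θ]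
    [MeasurableSpace Θ] [BorelSpace Θ] [Fintype X] [Fintype Y]
    (p : X → Y → Θ → ℝ) (hc : ∀ x y, Continuous (p x y)) (hnn : ∀ x y θ, 0 ≤ p x y θ)
    (hsum : ∀ θ : Θ, ∑ x : X, ∑ y : Y, p x y θ = 1)
    (πhat : ProbabilityMeasure Θ)
    (hmax : ∀ pr : ProbabilityMeasure Θ, condMutualInfo p pr ≤ condMutualInfo p πhat)
    (hpos : ∀ x : X, 0 < ∑ y : Y, pMix p πhat x y) (θ0 : Θ) :
    (∀ x y, pMix p πhat x y = 0 → p x y θ0 = 0) ∧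
    (∑ x : X, ∑ y : Y, negEnt (p x y θ0)) - (∑ x : X, negEnt (∑ y : Y, p x y θ0))
      - (∑ x : X, ∑ y : Y, p x y θ0 * Real.log (pMix p πhat x y))
      + (∑ x : X, (∑ y : Y, p x y θ0) * Real.log (∑ y : Y, pMix p πhat x y))
      ≤ condMutualInfo p πhat := by
  classical
  set m : X → Y → ℝ := fun x y => pMix p πhat x y with hm
  have hmnn : ∀ x y, 0 ≤ m x y := fun x y => integral_nonneg fun θ => hnn x y θ
  have hcneg : ∀ x y, Continuous fun θ => negEnt (p x y θ) := fun x y =>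
    Real.continuous_mul_log.comp (hc x y)
  have hcpx : ∀ x, Continuous fun θ => ∑ y : Y, p x y θ := fun x =>
    continuous_finset_sum _ fun y _ => hc x y
  have hA : Continuous fun θ => ∑ x : X, ∑ y : Y, negEnt (p x y θ) :=
    continuous_finset_sum _ fun x _ => continuous_finset_sum _ fun y _ => hcneg x y
  have hB : Continuous fun θ => ∑ x : X, negEnt (∑ y : Y, p x y θ) :=
    continuous_finset_sum _ fun x _ => Real.continuous_mul_log.comp (hcpx x)
  have hple : ∀ x y θ, p x y θ ≤ 1 := by
    intro x y θ
    calc p x y θ ≤ ∑ y' : Y, p x y' θ :=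
          Finset.single_le_sum (fun y' _ => hnn x y' θ) (Finset.mem_univ y)
      _ ≤ ∑ x' : X, ∑ y' : Y, p x' y' θ :=
          Finset.single_le_sum (fun x' _ => Finset.sum_nonneg fun y' _ => hnn x' y' θ)
            (Finset.mem_univ x)
      _ = 1 := hsum θ
  have hmsum : ∑ x : X, ∑ y : Y, m x y = 1 := by
    have h1 : ∀ x : X, ∑ y : Y, m x y = ∫ θ, (∑ y : Y, p x y θ) ∂(πhat : Measure Θ) := fun x =>
      (integral_finset_sum _ fun y _ => contIntegrable (hc x y) _).symm
    calc ∑ x : X, ∑ y : Y, m x y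
        = ∫ θ, (∑ x : X, ∑ y : Y, p x y θ) ∂(πhat : Measure Θ) := by
          simp only [h1]
          exact (integral_finset_sum _ fun x _ => contIntegrable (hcpx x) _).symm
      _ = ∫ _θ, (1:ℝ) ∂(πhat : Measure Θ) :=
          integral_congr_ae (Filter.Eventually.of_forall fun θ => hsum θ)
      _ = 1 := by simp
  set d : X → Y → ℝ := fun x y => p x y θ0 - m x y with hd
  set dX : X → ℝ := fun x => ∑ y : Y, d x y with hdX
  set IA : ℝ := ∫ θ, ∑ x : X, ∑ y : Y, negEnt (p x y θ) ∂(πhat : Measure Θ) with hIA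
  set IB : ℝ := ∫ θ, ∑ x : X, negEnt (∑ y : Y, p x y θ) ∂(πhat : Measure Θ) with hIB
  set C : ℝ := (∑ x : X, ∑ y : Y, negEnt (p x y θ0)) - IA
      - ((∑ x : X, negEnt (∑ y : Y, p x y θ0)) - IB) with hC
  have hI : condMutualInfo p πhat
      = IA - (∑ x : X, ∑ y : Y, negEnt (m x y)) - IB + ∑ x : X, negEnt (∑ y : Y, m x y) := rfl
  have hmixI : ∀ t, ∀ ht : t ∈ Set.Ioc (0:ℝ) 1,
      condMutualInfo p (mixP πhat θ0 t ht.1.le ht.2)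
        = ((1-t) * IA + t * (∑ x : X, ∑ y : Y, negEnt (p x y θ0)))
          - (∑ x : X, ∑ y : Y, negEnt (m x y + t * d x y))
          - ((1-t) * IB + t * (∑ x : X, negEnt (∑ y : Y, p x y θ0)))
          + ∑ x : X, negEnt ((∑ y : Y, m x y) + t * dX x) := by
    intro t ht
    have hpmix : ∀ x y, pMix p (mixP πhat θ0 t ht.1.le ht.2) x y = m x y + t * d x y := by
      intro x y
      show (∫ θ, p x y θ ∂(mixP πhat θ0 t ht.1.le ht.2 : Measure Θ)) = _
      rw [integral_mixP πhat θ0 t ht.1.le ht.2 (hc x y)]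
      show _ = pMix p πhat x y + t * (p x y θ0 - pMix p πhat x y)
      unfold pMix
      ring
    have hsum' : ∀ x, ∑ y : Y, (m x y + t * d x y) = (∑ y : Y, m x y) + t * dX x := by
      intro x
      rw [Finset.sum_add_distrib, ← Finset.mul_sum]
    unfold condMutualInfo
    rw [integral_mixP πhat θ0 t ht.1.le ht.2 hA, integral_mixP πhat θ0 t ht.1.le ht.2 hB]
    simp only [hpmix, hsum']
    try rw [← hIA]
    try rw [← hIB]
  have hD : ∀ t, ∀ _ht : t ∈ Set.Ioc (0:ℝ) 1,
      t * C - ((∑ x : X, ∑ y : Y, negEnt (m x y + t * d x y))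
          - ∑ x : X, ∑ y : Y, negEnt (m x y))
        + ((∑ x : X, negEnt ((∑ y : Y, m x y) + t * dX x))
          - ∑ x : X, negEnt (∑ y : Y, m x y)) ≤ 0 := by
    intro t ht
    have h1 := hmax (mixP πhat θ0 t ht.1.le ht.2)
    rw [hmixI t ht, hI] at h1
    rw [hC]
    linarith
  set l : Filter ℝ := 𝓝[>] (0:ℝ) with hl
  have ev1 : ∀ᶠ t in l, t ∈ Set.Ioc (0:ℝ) 1 := by
    filter_upwards [self_mem_nhdsWithin,
      mem_nhdsWithin_of_mem_nhds (Iio_mem_nhds one_pos)] with t h1 h2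
    exact ⟨h1, le_of_lt h2⟩
  set E : X → Y → ℝ → ℝ := fun x y t => (negEnt (m x y + t * d x y) - negEnt (m x y)) / t with hE
  set EX : X → ℝ → ℝ :=
    fun x t => (negEnt ((∑ y : Y, m x y) + t * dX x) - negEnt (∑ y : Y, m x y)) / t with hEX
  have hQ : ∀ t, ∀ _ht : t ∈ Set.Ioc (0:ℝ) 1,
      C - (∑ x : X, ∑ y : Y, E x y t) + ∑ x : X, EX x t ≤ 0 := by
    intro t ht
    have h1 := hD t ht
    have h2 : C - (∑ x : X, ∑ y : Y, E x y t) + ∑ x : X, EX x t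
        = (t * C - ((∑ x : X, ∑ y : Y, negEnt (m x y + t * d x y))
            - ∑ x : X, ∑ y : Y, negEnt (m x y))
          + ((∑ x : X, negEnt ((∑ y : Y, m x y) + t * dX x))
            - ∑ x : X, negEnt (∑ y : Y, m x y))) / t := by
      have htne : t ≠ 0 := ne_of_gt ht.1
      simp only [hE, hEX]
      rw [← Finset.sum_div]
      have e3 : ∀ x : X, ∑ y : Y, (negEnt (m x y + t * d x y) - negEnt (m x y)) / t
          = (∑ y : Y, (negEnt (m x y + t * d x y) - negEnt (m x y))) / t := fun x =>
        (Finset.sum_div _ _ _).symm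
      simp only [e3]
      rw [← Finset.sum_div]
      simp only [Finset.sum_sub_distrib]
      field_simp
    rw [h2]
    exact div_nonpos_of_nonpos_of_nonneg h1 ht.1.le
  have hEXtends : ∀ x : X, Tendsto (EX x) l (𝓝 (dX x * (Real.log (∑ y : Y, m x y) + 1))) :=
    fun x => slope_negEnt_tendsto (hpos x)
  have hall : ∀ x y, m x y = 0 → p x y θ0 = 0 := by
    by_contra hcon
    push_neg at hcon
    obtain ⟨x0, y0, hm0, hp0ne⟩ := hcon
    have hp0 : 0 < p x0 y0 θ0 := (hnn x0 y0 θ0).lt_of_ne (Ne.symm hp0ne)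
    have hd0 : d x0 y0 = p x0 y0 θ0 := by rw [hd]; simp [hm0]
    -- the blow-up term
    have htop : Tendsto (fun t => -(E x0 y0 t)) l atTop := by
      have := slope_negEnt_zero_atTop hp0
      refine this.congr fun t => ?_
      simp only [hE, hm0, hd0]
    -- finite part
    set g : X × Y → ℝ → ℝ :=
      fun i t => if 0 < m i.1 i.2 then E i.1 i.2 t else 0 with hg
    set G : ℝ :=
      ∑ i ∈ (Finset.univ : Finset (X × Y)).erase (x0, y0),
        (if 0 < m i.1 i.2 then d i.1 i.2 * (Real.log (m i.1 i.2) + 1) else 0) with hG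
    have hgt : Tendsto (fun t => ∑ i ∈ (Finset.univ : Finset (X × Y)).erase (x0, y0), g i t)
        l (𝓝 G) := by
      refine tendsto_finset_sum _ fun i _ => ?_
      by_cases hmi : 0 < m i.1 i.2
      · simp only [hg, if_pos hmi]
        exact slope_negEnt_tendsto hmi
      · simp only [hg, if_neg hmi]
        exact tendsto_const_nhds
    set W : ℝ → ℝ := fun t =>
      (C - (∑ i ∈ (Finset.univ : Finset (X × Y)).erase (x0, y0), g i t) + ∑ x : X, EX x t)
        + (-(E x0 y0 t)) with hW
    have hWtop : Tendsto W l atTop := by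
      exact Tendsto.add_atTop
        ((tendsto_const_nhds.sub hgt).add (tendsto_finset_sum _ fun x _ => hEXtends x)) htop
    have hWle : ∀ t, t ∈ Set.Ioc (0:ℝ) 1 → W t ≤ 0 := by
      intro t ht
      have hEsum : ∑ x : X, ∑ y : Y, E x y t
          = E x0 y0 t + ∑ i ∈ (Finset.univ : Finset (X × Y)).erase (x0, y0), E i.1 i.2 t := by
        rw [← Fintype.sum_prod_type (f := fun i : X × Y => E i.1 i.2 t)]
        exact (Finset.add_sum_erase _ _ (Finset.mem_univ (x0, y0))).symm
      have hEg : ∀ i ∈ (Finset.univ : Finset (X × Y)).erase (x0, y0), E i.1 i.2 t ≤ g i t := by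
        intro i _
        by_cases hmi : 0 < m i.1 i.2
        · simp only [hg, if_pos hmi]
          exact le_rfl
        · have hmz : m i.1 i.2 = 0 := le_antisymm (not_lt.1 hmi) (hmnn i.1 i.2)
          simp only [hg, if_neg hmi]
          have hdz : d i.1 i.2 = p i.1 i.2 θ0 := by rw [hd]; simp [hmz]
          have : E i.1 i.2 t = p i.1 i.2 θ0 * Real.log (t * p i.1 i.2 θ0) := by
            simp only [hE, hmz, hdz]
            exact slope_negEnt_zero _ _ (ne_of_gt ht.1)
          rw [this]
          apply mul_nonpos_of_nonneg_of_nonpos (hnn i.1 i.2 θ0)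
          apply Real.log_nonpos (mul_nonneg ht.1.le (hnn i.1 i.2 θ0))
          exact mul_le_one₀ ht.2 (hnn i.1 i.2 θ0) (hple i.1 i.2 θ0)
      have h2 := hQ t ht
      have h3 : W t ≤ C - (∑ x : X, ∑ y : Y, E x y t) + ∑ x : X, EX x t := by
        rw [hW, hEsum]
        have := Finset.sum_le_sum hEg
        simp only
        linarith
      linarith
    obtain ⟨t, h1, h2⟩ := ((hWtop.eventually_gt_atTop 0).and
      (ev1.mono fun t ht => hWle t ht)).exists
    linarith
  refine ⟨hall, ?_⟩
  have hEtends : ∀ x y, Tendsto (E x y) l (𝓝 (d x y * (Real.log (m x y) + 1))) := by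
    intro x y
    rcases eq_or_lt_of_le (hmnn x y) with hm0 | hmpos
    · have hdz : d x y = 0 := by rw [hd]; simp [← hm0, hall x y hm0.symm]
      have : ∀ t : ℝ, E x y t = 0 := by
        intro t
        simp only [hE, hdz, mul_zero, add_zero, sub_self, zero_div]
      rw [hdz]
      simp only [zero_mul]
      exact (tendsto_const_nhds.congr fun t => (this t).symm)
    · exact slope_negEnt_tendsto hmpos
  have hQtends : Tendsto (fun t => C - (∑ x : X, ∑ y : Y, E x y t) + ∑ x : X, EX x t) l
      (𝓝 (C - (∑ x : X, ∑ y : Y, d x y * (Real.log (m x y) + 1))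
        + ∑ x : X, dX x * (Real.log (∑ y : Y, m x y) + 1))) := by
    refine (tendsto_const_nhds.sub ?_).add (tendsto_finset_sum _ fun x _ => hEXtends x)
    exact tendsto_finset_sum _ fun x _ => tendsto_finset_sum _ fun y _ => hEtends x y
  have hL : C - (∑ x : X, ∑ y : Y, d x y * (Real.log (m x y) + 1))
      + ∑ x : X, dX x * (Real.log (∑ y : Y, m x y) + 1) ≤ 0 :=
    le_of_tendsto hQtends (ev1.mono fun t ht => hQ t ht)
  -- final algebra
  have hdsum : ∑ x : X, ∑ y : Y, d x y = 0 := by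
    simp only [hd, Finset.sum_sub_distrib, hsum θ0, hmsum, sub_self]
  have hdXsum : ∑ x : X, dX x = 0 := by
    simp only [hdX]; exact hdsum
  have e1 : ∑ x : X, ∑ y : Y, d x y * (Real.log (m x y) + 1)
      = (∑ x : X, ∑ y : Y, p x y θ0 * Real.log (m x y))
        - (∑ x : X, ∑ y : Y, negEnt (m x y)) + ∑ x : X, ∑ y : Y, d x y := by
    have : ∀ x y, d x y * (Real.log (m x y) + 1)
        = p x y θ0 * Real.log (m x y) - negEnt (m x y) + d x y := by
      intro x y
      simp only [hd, negEnt]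
      ring
    simp only [this, Finset.sum_add_distrib, Finset.sum_sub_distrib]
  have e2 : ∑ x : X, dX x * (Real.log (∑ y : Y, m x y) + 1)
      = (∑ x : X, (∑ y : Y, p x y θ0) * Real.log (∑ y : Y, m x y))
        - (∑ x : X, negEnt (∑ y : Y, m x y)) + ∑ x : X, dX x := by
    have : ∀ x, dX x * (Real.log (∑ y : Y, m x y) + 1)
        = (∑ y : Y, p x y θ0) * Real.log (∑ y : Y, m x y)
          - negEnt (∑ y : Y, m x y) + dX x := by
      intro x
      have hdXx : dX x = (∑ y : Y, p x y θ0) - ∑ y : Y, m x y := by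
        simp only [hdX, hd, Finset.sum_sub_distrib]
      rw [hdXx, negEnt]
      ring
    simp only [this, Finset.sum_add_distrib, Finset.sum_sub_distrib]
  rw [hI]
  rw [e1, e2, hdsum] at hL
  try rw [hdXsum] at hL
  rw [hC] at hL
  have hmap : ∀ x y, pMix p πhat x y = m x y := fun _ _ => rfl
  simp only [hmap]
  linarith

end Helpers

/-- Theorem 2, part 2: if `π̂` maximizes the conditional mutual information and
`p_{π̂}(x) > 0` for every `x`, then the Bayesian predictive density `p_{π̂}(y|x)` is minimax. -/
theorem latent_information_prior_gives_minimax
    {Θ X Y : Type*} [MetricSpace Θ] [CompactSpace Θ] [Nonempty Θ]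
    [MeasurableSpace Θ] [BorelSpace Θ] [Fintype X] [Fintype Y]
    (p : X → Y → Θ → ℝ)
    (hc : ∀ x y, Continuous (p x y))
    (hnn : ∀ x y θ, 0 ≤ p x y θ)
    (hsum : ∀ θ : Θ, ∑ x : X, ∑ y : Y, p x y θ = 1)
    (πhat : ProbabilityMeasure Θ)
    (hmax : ∀ π : ProbabilityMeasure Θ, condMutualInfo p π ≤ condMutualInfo p πhat)
    (hpos : ∀ x : X, 0 < ∑ y : Y, pMix p πhat x y) :
    (⨆ θ : Θ, risk p (fun x y => pMix p πhat x y / ∑ y' : Y, pMix p πhat x y') θ)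
      = ⨅ q : {q : X → Y → ℝ // IsPredDensity q}, ⨆ θ : Θ, risk p q.val θ := by
  classical
  set qhat : X → Y → ℝ := fun x y => pMix p πhat x y / ∑ y' : Y, pMix p πhat x y' with hqhat
  have hmnn : ∀ x y, 0 ≤ pMix p πhat x y := fun x y => integral_nonneg fun θ => hnn x y θ
  have hmle : ∀ x y, pMix p πhat x y ≤ ∑ y' : Y, pMix p πhat x y' := fun x y =>
    Finset.single_le_sum (fun y' _ => hmnn x y') (Finset.mem_univ y)
  have hqpd : IsPredDensity qhat := by
    constructor
    · intro x y
      exact ⟨div_nonneg (hmnn x y) (hpos x).le, div_le_one_of_le₀ (hmle x y) (hpos x).le⟩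
    · intro x
      rw [hqhat]
      simp only
      rw [← Finset.sum_div, div_self (hpos x).ne']
  -- upper bound: risk of the Bayes rule is at most the mutual information
  have hub : ∀ θ : Θ, risk p qhat θ ≤ ((condMutualInfo p πhat : ℝ) : EReal) := by
    intro θ
    obtain ⟨ha, hle⟩ := key_upper p hc hnn hsum πhat hmax hpos θ
    have hz : ∀ x y, qhat x y = 0 → p x y θ = 0 := by
      intro x y h
      rw [hqhat] at h
      simp only at h
      rcases div_eq_zero_iff.1 h with h0 | h0
      · exact ha x y h0
      · exact absurd h0 (hpos x).ne'
    rw [risk_eq_real p qhat θ (fun x y => hnn x y θ) hz]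
    rw [EReal.coe_le_coe_iff]
    have hlog : ∀ x y, p x y θ * Real.log (qhat x y)
        = p x y θ * Real.log (pMix p πhat x y)
          - p x y θ * Real.log (∑ y' : Y, pMix p πhat x y') := by
      intro x y
      rcases eq_or_lt_of_le (hnn x y θ) with hp0 | hpp
      · rw [← hp0]; ring
      · have hm0 : pMix p πhat x y ≠ 0 := by
          intro h0
          exact absurd (ha x y h0) (ne_of_gt hpp)
        rw [hqhat]
        simp only
        rw [Real.log_div hm0 (hpos x).ne']
        ring
    have hrw : ∑ x : X, ∑ y : Y, p x y θ * Real.log (qhat x y)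
        = (∑ x : X, ∑ y : Y, p x y θ * Real.log (pMix p πhat x y))
          - ∑ x : X, (∑ y : Y, p x y θ) * Real.log (∑ y' : Y, pMix p πhat x y') := by
      simp only [hlog, Finset.sum_sub_distrib]
      congr 1
      exact Finset.sum_congr rfl fun x _ => (Finset.sum_mul _ _ _).symm
    rw [hrw]
    linarith
  -- lower bound: any predictive density has sup-risk at least the mutual information
  have hlb : ∀ q : X → Y → ℝ, IsPredDensity q →
      ((condMutualInfo p πhat : ℝ) : EReal) ≤ ⨆ θ : Θ, risk p q θ := by
    intro q hq
    by_cases hz : ∀ θ x y, q x y = 0 → p x y θ = 0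
    · -- risk is real-valued everywhere
      have hrisk : ∀ θ : Θ, risk p q θ =
          (((∑ x : X, ∑ y : Y, negEnt (p x y θ)) - (∑ x : X, negEnt (∑ y : Y, p x y θ))
            - ∑ x : X, ∑ y : Y, p x y θ * Real.log (q x y) : ℝ) : EReal) := fun θ =>
        risk_eq_real p q θ (fun x y => hnn x y θ) (hz θ)
      set s : Θ → ℝ := fun θ => (∑ x : X, ∑ y : Y, negEnt (p x y θ))
          - (∑ x : X, negEnt (∑ y : Y, p x y θ))
          - ∑ x : X, ∑ y : Y, p x y θ * Real.log (q x y) with hs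
      set S : EReal := ⨆ θ : Θ, risk p q θ with hS
      by_cases hStop : S = ⊤
      · rw [hStop]; exact le_top
      have hcle : ∀ θ : Θ, ((s θ : ℝ) : EReal) ≤ S := fun θ => (hrisk θ) ▸ le_iSup (risk p q) θ
      have hSbot : S ≠ ⊥ := by
        intro h0
        have := hcle (Classical.arbitrary Θ)
        rw [h0, le_bot_iff] at this
        exact EReal.coe_ne_bot _ this
      have hbound : ∀ θ : Θ, s θ ≤ S.toReal := by
        intro θ
        have := hcle θ
        rw [← EReal.coe_toReal hStop hSbot, EReal.coe_le_coe_iff] at this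
        exact this
      -- continuity and integrability of s
      have hcneg : ∀ x y, Continuous fun θ => negEnt (p x y θ) := fun x y =>
        Real.continuous_mul_log.comp (hc x y)
      have hcpx : ∀ x, Continuous fun θ => ∑ y : Y, p x y θ := fun x =>
        continuous_finset_sum _ fun y _ => hc x y
      have hA : Continuous fun θ => ∑ x : X, ∑ y : Y, negEnt (p x y θ) :=
        continuous_finset_sum _ fun x _ => continuous_finset_sum _ fun y _ => hcneg x y
      have hB : Continuous fun θ => ∑ x : X, negEnt (∑ y : Y, p x y θ) :=
        continuous_finset_sum _ fun x _ => Real.continuous_mul_log.comp (hcpx x)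
      have hg : Continuous fun θ => ∑ x : X, ∑ y : Y, p x y θ * Real.log (q x y) :=
        continuous_finset_sum _ fun x _ => continuous_finset_sum _ fun y _ =>
          (hc x y).mul continuous_const
      have hsint : Integrable s (πhat : Measure Θ) :=
        contIntegrable (((hA.sub hB).sub hg)) _
      have hmono : ∫ θ, s θ ∂(πhat : Measure Θ) ≤ S.toReal := by
        calc ∫ θ, s θ ∂(πhat : Measure Θ) ≤ ∫ _θ, S.toReal ∂(πhat : Measure Θ) :=
              integral_mono hsint (integrable_const _) hbound
          _ = S.toReal := by simp
      have hIs : ∫ θ, s θ ∂(πhat : Measure Θ)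
          = (∫ θ, ∑ x : X, ∑ y : Y, negEnt (p x y θ) ∂(πhat : Measure Θ))
            - (∫ θ, ∑ x : X, negEnt (∑ y : Y, p x y θ) ∂(πhat : Measure Θ))
            - ∑ x : X, ∑ y : Y, pMix p πhat x y * Real.log (q x y) := by
        rw [hs]
        rw [integral_sub
            (f := fun θ => (∑ x : X, ∑ y : Y, negEnt (p x y θ))
              - ∑ x : X, negEnt (∑ y : Y, p x y θ))
            (g := fun θ => ∑ x : X, ∑ y : Y, p x y θ * Real.log (q x y))
            ((contIntegrable hA _).sub (contIntegrable hB _)) (contIntegrable hg _),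
          integral_sub (contIntegrable hA _) (contIntegrable hB _)]
        congr 1
        rw [integral_finset_sum _ (f := fun x θ => ∑ y : Y, p x y θ * Real.log (q x y)) fun x _ => continuous_finset_sum (Finset.univ) (fun y _ =>
            (hc x y).mul continuous_const) |>.integrable_of_hasCompactSupport
            (HasCompactSupport.of_compactSpace _)]
        refine Finset.sum_congr rfl fun x _ => ?_
        rw [integral_finset_sum _ (f := fun y θ => p x y θ * Real.log (q x y)) fun y _ => contIntegrable ((hc x y).mul continuous_const) _]
        refine Finset.sum_congr rfl fun y _ => ?_
        rw [integral_mul_const]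
        rfl
      -- Gibbs' inequality
      have hqm : ∀ x y, q x y = 0 → pMix p πhat x y = 0 := by
        intro x y h
        have : (fun θ => p x y θ) = fun _ => (0:ℝ) := funext fun θ => hz θ x y h
        show (∫ θ, p x y θ ∂(πhat : Measure Θ)) = 0
        rw [this]
        simp
      have hgibbs : ∀ x : X, ∑ y : Y, pMix p πhat x y * Real.log (q x y)
          ≤ (∑ y : Y, negEnt (pMix p πhat x y)) - negEnt (∑ y : Y, pMix p πhat x y) := by
        intro x
        have key : ∀ y : Y, pMix p πhat x y * Real.log (q x y) - negEnt (pMix p πhat x y)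
            + pMix p πhat x y * Real.log (∑ y' : Y, pMix p πhat x y')
            ≤ (if 0 < pMix p πhat x y
                then q x y * (∑ y' : Y, pMix p πhat x y') - pMix p πhat x y else 0) := by
          intro y
          rcases eq_or_lt_of_le (hmnn x y) with hm0 | hmp
          · rw [if_neg (by rw [← hm0]; exact lt_irrefl 0), ← hm0, negEnt_zero]
            ring_nf
            exact le_refl 0
          · rw [if_pos hmp]
            have hq0 : 0 < q x y := by
              rcases eq_or_lt_of_le ((hq.1 x y).1) with h0 | h0
              · exact absurd (hqm x y h0.symm) (ne_of_gt hmp)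
              · exact h0
            have harg : 0 < q x y * (∑ y' : Y, pMix p πhat x y') / pMix p πhat x y :=
              div_pos (mul_pos hq0 (hpos x)) hmp
            have hlog := Real.log_le_sub_one_of_pos harg
            have hmul := mul_le_mul_of_nonneg_left hlog hmp.le
            have heq : pMix p πhat x y * (q x y * (∑ y' : Y, pMix p πhat x y')
                / pMix p πhat x y - 1)
                = q x y * (∑ y' : Y, pMix p πhat x y') - pMix p πhat x y := by
              field_simp
            rw [heq] at hmul
            refine le_trans (le_of_eq ?_) hmul
            rw [Real.log_div (mul_ne_zero hq0.ne' (hpos x).ne') hmp.ne',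
              Real.log_mul hq0.ne' (hpos x).ne', negEnt]
            ring
        have hsumkey := Finset.sum_le_sum fun y (_ : y ∈ Finset.univ) => key y
        have hrhs : ∑ y : Y, (if 0 < pMix p πhat x y
              then q x y * (∑ y' : Y, pMix p πhat x y') - pMix p πhat x y else 0) ≤ 0 := by
          rw [Finset.sum_ite, Finset.sum_const, smul_zero, add_zero]
          rw [Finset.sum_sub_distrib]
          have h1 : ∑ y ∈ Finset.univ.filter (fun y => 0 < pMix p πhat x y),
              pMix p πhat x y = ∑ y : Y, pMix p πhat x y := by
            refine Finset.sum_subset (Finset.filter_subset _ _) fun y _ hy => ?_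
            rw [Finset.mem_filter] at hy
            push_neg at hy
            exact le_antisymm (hy (Finset.mem_univ y)) (hmnn x y)
          have h2 : ∑ y ∈ Finset.univ.filter (fun y => 0 < pMix p πhat x y),
              q x y * (∑ y' : Y, pMix p πhat x y') ≤ ∑ y' : Y, pMix p πhat x y' := by
            rw [← Finset.sum_mul]
            have : ∑ y ∈ Finset.univ.filter (fun y => 0 < pMix p πhat x y), q x y ≤ 1 := by
              rw [← hq.2 x]
              exact Finset.sum_le_sum_of_subset_of_nonneg (Finset.filter_subset _ _)
                fun y _ _ => (hq.1 x y).1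
            calc (∑ y ∈ Finset.univ.filter (fun y => 0 < pMix p πhat x y), q x y)
                  * (∑ y' : Y, pMix p πhat x y')
                ≤ 1 * (∑ y' : Y, pMix p πhat x y') :=
                  mul_le_mul_of_nonneg_right this (hpos x).le
              _ = ∑ y' : Y, pMix p πhat x y' := one_mul _
          rw [h1]
          linarith
        have hlhs : ∑ y : Y, (pMix p πhat x y * Real.log (q x y) - negEnt (pMix p πhat x y)
              + pMix p πhat x y * Real.log (∑ y' : Y, pMix p πhat x y'))
            = (∑ y : Y, pMix p πhat x y * Real.log (q x y))
              - (∑ y : Y, negEnt (pMix p πhat x y)) + negEnt (∑ y : Y, pMix p πhat x y) := by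
          rw [Finset.sum_add_distrib, Finset.sum_sub_distrib, ← Finset.sum_mul, negEnt]
        rw [hlhs] at hsumkey
        have := le_trans hsumkey hrhs
        linarith
      have hgibbs' : ∑ x : X, ∑ y : Y, pMix p πhat x y * Real.log (q x y)
          ≤ (∑ x : X, ∑ y : Y, negEnt (pMix p πhat x y))
            - ∑ x : X, negEnt (∑ y : Y, pMix p πhat x y) := by
        have := Finset.sum_le_sum fun x (_ : x ∈ Finset.univ) => hgibbs x
        rw [Finset.sum_sub_distrib] at this
        exact this
      have hfin : condMutualInfo p πhat ≤ S.toReal := by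
        have hIdef : condMutualInfo p πhat
            = (∫ θ, ∑ x : X, ∑ y : Y, negEnt (p x y θ) ∂(πhat : Measure Θ))
              - (∑ x : X, ∑ y : Y, negEnt (pMix p πhat x y))
              - (∫ θ, ∑ x : X, negEnt (∑ y : Y, p x y θ) ∂(πhat : Measure Θ))
              + ∑ x : X, negEnt (∑ y : Y, pMix p πhat x y) := rfl
        rw [hIdef]
        rw [hIs] at hmono
        linarith
      calc ((condMutualInfo p πhat : ℝ) : EReal) ≤ ((S.toReal : ℝ) : EReal) :=
            EReal.coe_le_coe_iff.2 hfin
        _ = S := EReal.coe_toReal hStop hSbot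
    · -- some klTerm is ⊤, so the sup-risk is ⊤
      push_neg at hz
      obtain ⟨θ, x0, y0, hq0, hp0⟩ := hz
      have htop : risk p q θ = ⊤ := by
        unfold risk
        refine erealSumEqTop _ _ (fun x _ => erealSumNeBot _ _ fun y _ => klTermNeBot _ _ _)
          x0 (Finset.mem_univ x0) ?_
        exact erealSumEqTop _ _ (fun y _ => klTermNeBot _ _ _) y0 (Finset.mem_univ y0)
          (klTermTop hp0 hq0)
      have : (⊤ : EReal) ≤ ⨆ θ : Θ, risk p q θ := htop ▸ le_iSup (risk p q) θ
      exact le_trans le_top this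
  -- conclude
  apply le_antisymm
  · refine le_iInf fun q => ?_
    exact le_trans (iSup_le fun θ => hub θ) (hlb q.1 q.2)
  · exact iInf_le (fun q : {q : X → Y → ℝ // IsPredDensity q} => ⨆ θ : Θ, risk p q.val θ)
      ⟨qhat, hqpd⟩
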